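/- arXiv:1010.3201 — 4 statements merged into one kernel-verified Lean document; each statement's English description precedes it below -/
import Mathlib

section
/- Shannon's lower bound: let u be a word of length n over alphabet {a₁,...,a_s} with m_i occurrences of a_i (so n = ∑ m_i, n > 0). For any prefix-free family of binary words w₁,...,w_s, the word ξ obtained by substituting w_i for each occurrence of a_i satisfies |ξ| ≥ nH, where H = -∑ (m_i/n) log(m_i/n) is the entropy of the frequency distribution. -/
open Real

def PrefixFreeFamily {s : ℕ} (w : Fin s → List Bool) : Prop :=
  ∀ i j : Fin s, i ≠ j → ¬ (w i <+: w j)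

lemma kraft {s : ℕ} (w : Fin s → List Bool) (hw : PrefixFreeFamily w) :
    ∑ i, ((2:ℝ)⁻¹) ^ (w i).length ≤ 1 := by
  classical
  let L := Finset.univ.sup (fun i => (w i).length)
  have hle : ∀ i, (w i).length ≤ L :=
    fun i => Finset.le_sup (f := fun i => (w i).length) (Finset.mem_univ i)
  let F : (Σ i : Fin s, List.Vector Bool (L - (w i).length)) → List.Vector Bool L :=
    fun p => ⟨w p.1 ++ p.2.toList, by
      have h1 := hle p.1
      have h2 := p.2.toList_length
      simp [h2]; omega⟩
  have hinj : Function.Injective F := by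
    rintro ⟨i, v⟩ ⟨j, u⟩ h
    have h' : (w i ++ v.toList : List Bool) = w j ++ u.toList := congrArg Subtype.val h
    rcases eq_or_ne i j with rfl | hij
    · exact congrArg _ (Subtype.ext (List.append_cancel_left h'))
    · exfalso
      have h1 : w i <+: w j ++ u.toList := ⟨v.toList, h'⟩
      have h2 : w j <+: w j ++ u.toList := ⟨u.toList, rfl⟩
      rcases (List.prefix_or_prefix_of_prefix h1 h2) with hp | hp
      · exact hw i j hij hp
      · exact hw j i hij.symm hp
  have hcard := Fintype.card_le_of_injective F hinj
  simp only [Fintype.card_sigma, card_vector, Fintype.card_bool] at hcard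
  have hstep : ∑ i, ((2:ℝ)⁻¹) ^ (w i).length
      = (∑ i, (2:ℝ) ^ (L - (w i).length)) / (2:ℝ) ^ L := by
    rw [Finset.sum_div]
    refine Finset.sum_congr rfl fun i _ => ?_
    rw [pow_sub₀ _ two_ne_zero (hle i)]
    field_simp
    rw [← mul_pow]; norm_num
  rw [hstep, div_le_one (by positivity)]
  calc (∑ i, (2:ℝ) ^ (L - (w i).length)) = ((∑ i, 2 ^ (L - (w i).length) : ℕ) : ℝ) := by
        push_cast; ring
    _ ≤ ((2 ^ L : ℕ) : ℝ) := by exact_mod_cast hcard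
    _ = (2:ℝ) ^ L := by push_cast; ring

/-- Shannon's lower bound: the length `∑ mᵢ |wᵢ|` of the encoded word is at least `n·H`. -/
theorem shannon_lower_bound (s : ℕ) (m : Fin s → ℕ) (n : ℕ)
    (hn : n = ∑ i, m i) (hn0 : 0 < n)
    (w : Fin s → List Bool) (hw : PrefixFreeFamily w) :
    (n : ℝ) * (-(∑ i, ((m i : ℝ) / n) * logb 2 ((m i : ℝ) / n))) ≤
      ∑ i, (m i : ℝ) * (w i).length := by
  have hkraft := kraft w hw
  have hlog2 : (0:ℝ) < Real.log 2 := Real.log_pos one_lt_two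
  have hn0' : (0:ℝ) < n := by exact_mod_cast hn0
  have key : ∀ i : Fin s, (m i : ℝ) * Real.log n - (m i) * Real.log (m i)
      - (m i) * (w i).length * Real.log 2
      ≤ (n:ℝ) * ((2:ℝ)⁻¹) ^ (w i).length - m i := by
    intro i
    rcases Nat.eq_zero_or_pos (m i) with h | h
    · simp [h]
    · have hm : (0:ℝ) < m i := by exact_mod_cast h
      have hx : (0:ℝ) < (n:ℝ) / (m i * 2 ^ (w i).length) := by positivity
      have hlog := Real.log_le_sub_one_of_pos hx
      rw [Real.log_div (by positivity) (by positivity),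
        Real.log_mul (by positivity) (by positivity), Real.log_pow] at hlog
      have h2 := mul_le_mul_of_nonneg_left hlog hm.le
      have e1 : (m i:ℝ) * ((n:ℝ) / (m i * 2 ^ (w i).length) - 1)
          = (n:ℝ) * ((2:ℝ)⁻¹) ^ (w i).length - m i := by
        rw [inv_pow]; field_simp
      have e2 : (m i:ℝ) * (Real.log n - ((Real.log (m i)) + (w i).length * Real.log 2))
          = (m i : ℝ) * Real.log n - (m i) * Real.log (m i)
            - (m i) * (w i).length * Real.log 2 := by ring
      rw [e1, e2] at h2
      exact h2
  have hsum := Finset.sum_le_sum (fun i (_ : i ∈ Finset.univ) => key i)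
  have hsum2 : ∑ i, ((n:ℝ) * ((2:ℝ)⁻¹) ^ (w i).length - (m i : ℝ)) ≤ 0 := by
    rw [Finset.sum_sub_distrib, ← Finset.mul_sum]
    have hmn : ∑ i, (m i : ℝ) = (n:ℝ) := by rw [hn]; push_cast; ring
    rw [hmn]
    nlinarith [hkraft, hn0']
  have hmain : ∑ i, ((m i : ℝ) * Real.log n - (m i) * Real.log (m i)
      - (m i) * (w i).length * Real.log 2) ≤ 0 := le_trans hsum hsum2
  have hEnt : (n : ℝ) * (-(∑ i, ((m i : ℝ) / n) * logb 2 ((m i : ℝ) / n)))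
      = ∑ i, ((m i : ℝ) * Real.log n - (m i) * Real.log (m i)) / Real.log 2 := by
    rw [mul_neg, Finset.mul_sum, ← Finset.sum_neg_distrib]
    refine Finset.sum_congr rfl fun i _ => ?_
    rcases Nat.eq_zero_or_pos (m i) with h | h
    · simp [h]
    · have hm : (0:ℝ) < m i := by exact_mod_cast h
      rw [Real.logb, Real.log_div hm.ne' hn0'.ne']
      field_simp
      ring
  rw [hEnt, ← Finset.sum_div, div_le_iff₀ hlog2]
  have expand : (∑ i, (m i : ℝ) * (w i).length) * Real.log 2
      = ∑ i, (m i : ℝ) * (w i).length * Real.log 2 := by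
    rw [Finset.sum_mul]
  rw [expand]
  have : ∑ i, ((m i : ℝ) * Real.log n - (m i) * Real.log (m i))
      - ∑ i, (m i : ℝ) * (w i).length * Real.log 2
      = ∑ i, ((m i : ℝ) * Real.log n - (m i) * Real.log (m i)
          - (m i) * (w i).length * Real.log 2) := by
    rw [← Finset.sum_sub_distrib]
  linarith [hmain, this]
end

section
/- Invariance theorem: there exists a partial computable function V : {0,1}* ⇀ ℕ such that for every partial computable function φ : {0,1}* ⇀ ℕ there is a constant c with K_V(y) ≤ K_φ(y) + c for all y ∈ ℕ, where K_ψ(y) = min{|p| : ψ(p) = y} (min ∅ = ∞, values in ℕ∞). -/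
open Nat.Partrec (Code)
open Encodable Denumerable

/-- Parse a word `1^e 0 q` into `(e, q)`. -/
def myParse (l : List Bool) : Option (ℕ × List Bool) :=
  l.rec none fun b l IH => bif b then IH.map (fun e => (e.1 + 1, e.2)) else some (0, l)

@[simp] lemma myParse_nil : myParse [] = none := rfl
@[simp] lemma myParse_false (l : List Bool) : myParse (false :: l) = some (0, l) := rfl
@[simp] lemma myParse_true (l : List Bool) :
    myParse (true :: l) = (myParse l).map (fun e => (e.1 + 1, e.2)) := rfl

lemma myParse_replicate (e : ℕ) (q : List Bool) :
    myParse (List.replicate e true ++ false :: q) = some (e, q) := by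
  induction e with
  | zero => simp
  | succ n ih => simp [List.replicate_succ, ih]

lemma myParse_primrec : Primrec myParse := by
  have := Primrec.list_rec (Primrec.id (α := List Bool))
    (Primrec.const (none : Option (ℕ × List Bool)))
    (h := fun (_ : List Bool) (x : Bool × List Bool × Option (ℕ × List Bool)) =>
      bif x.1 then x.2.2.map (fun e => (e.1 + 1, e.2)) else some (0, x.2.1))
    (hh := ?_)
  · exact this
  · apply Primrec.cond (Primrec.fst.comp Primrec.snd)
    · exact Primrec.option_map ((Primrec.snd.comp Primrec.snd).comp Primrec.snd)
        ((Primrec.succ.comp (Primrec.fst.comp Primrec.snd)).pair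
          (Primrec.snd.comp Primrec.snd))
    · exact Primrec.option_some.comp
        ((Primrec.const 0).pair ((Primrec.fst.comp Primrec.snd).comp Primrec.snd))

/-- The universal machine: on `1^e 0 q`, run the `e`-th code on (the encoding of) `q`. -/
def myV : List Bool →. ℕ := fun p =>
  (myParse p : Part (ℕ × List Bool)).bind fun e =>
    (Denumerable.ofNat Code e.1).eval (Encodable.encode e.2)

lemma myV_partrec : Partrec myV := by
  have h1 : Partrec fun p : List Bool => (myParse p : Part (ℕ × List Bool)) :=
    myParse_primrec.to_comp.ofOption
  exact h1.bind <| Nat.Partrec.Code.eval_part.comp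
    (Computable.ofNat Code |>.comp (Computable.fst.comp Computable.snd))
    (Computable.encode.comp (Computable.snd.comp Computable.snd))

lemma myV_spec (c : Code) {φ : List Bool →. ℕ}
    (hc : ∀ q : List Bool, c.eval (Encodable.encode q) = (φ q).map Encodable.encode)
    (q : List Bool) :
    myV (List.replicate (Encodable.encode c) true ++ false :: q) = φ q := by
  simp only [myV, myParse_replicate, Part.coe_some, Part.bind_some,
    Denumerable.ofNat_encode, hc]
  simp [Part.map_id']

/-- Kolmogorov complexity associated to a partial function `ψ : {0,1}* ⇀ α`:
the least length of a word `p` with `ψ(p) = y` (with `min ∅ = ⊤` in `ℕ∞`). -/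
noncomputable def Kf {α : Type} (ψ : List Bool →. α) (y : α) : ℕ∞ :=
  sInf {n : ℕ∞ | ∃ p : List Bool, y ∈ ψ p ∧ (p.length : ℕ∞) = n}

/-- The invariance theorem: there is an optimal partial computable function. -/
theorem invariance_theorem :
    ∃ V : List Bool →. ℕ, Partrec V ∧
      ∀ φ : List Bool →. ℕ, Partrec φ →
        ∃ c : ℕ, ∀ y : ℕ, Kf V y ≤ Kf φ y + (c : ℕ∞) := by
  refine ⟨myV, myV_partrec, fun φ hφ => ?_⟩
  obtain ⟨c, hc⟩ := Nat.Partrec.Code.exists_code.1 hφ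
  have hc' : ∀ q : List Bool, c.eval (Encodable.encode q) = (φ q).map Encodable.encode := by
    intro q
    rw [hc]
    simp [Encodable.encodek]
  refine ⟨Encodable.encode c + 1, fun y => ?_⟩
  by_cases h : ∃ p : List Bool, y ∈ φ p
  · -- the ℕ-valued infimum is attained
    set S : Set ℕ := {k : ℕ | ∃ p : List Bool, y ∈ φ p ∧ p.length = k}
    have hS : S.Nonempty := by obtain ⟨p, hp⟩ := h; exact ⟨p.length, p, hp, rfl⟩
    obtain ⟨p, hp, hplen⟩ : ∃ p : List Bool, y ∈ φ p ∧ p.length = sInf S := Nat.sInf_mem hS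
    have hKφ : Kf φ y = ((sInf S : ℕ) : ℕ∞) := by
      apply le_antisymm
      · have hm : ((sInf S : ℕ) : ℕ∞) ∈
            {n : ℕ∞ | ∃ p : List Bool, y ∈ φ p ∧ (p.length : ℕ∞) = n} :=
          ⟨p, hp, by rw [hplen]⟩
        exact sInf_le hm
      · refine le_sInf fun n hn => ?_
        obtain ⟨q, hq, hqlen⟩ := hn
        have hqS : q.length ∈ S := ⟨q, hq, rfl⟩
        rw [← hqlen]
        exact_mod_cast Nat.sInf_le hqS
    have hmem : y ∈ myV (List.replicate (Encodable.encode c) true ++ false :: p) := by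
      rw [myV_spec c hc']; exact hp
    have step : Kf myV y ≤
        ((List.replicate (Encodable.encode c) true ++ false :: p).length : ℕ∞) :=
      sInf_le ⟨List.replicate (Encodable.encode c) true ++ false :: p, hmem, rfl⟩
    calc Kf myV y ≤ ((List.replicate (Encodable.encode c) true ++ false :: p).length : ℕ∞) :=
          step
      _ = ((sInf S : ℕ) : ℕ∞) + ((Encodable.encode c + 1 : ℕ) : ℕ∞) := by
          push_cast [List.length_append, List.length_replicate, List.length_cons, hplen]
          ring
      _ = Kf φ y + _ := by rw [hKφ]
  · have : Kf φ y = ⊤ := by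
      rw [Kf, sInf_eq_top]
      rintro n ⟨p, hp, -⟩
      exact absurd ⟨p, hp⟩ h
    rw [this]
    simp
end

section
/- Kolmogorov complexity K : ℕ → ℕ is not a computable function. -/
/-- `V` is optimal: it is partial computable and `K_V` is minimal, up to an
additive constant, among the `K_φ` for `φ` partial computable. -/
def OptimalFn {α : Type} [Primcodable α] (V : List Bool →. α) : Prop :=
  Partrec V ∧ ∀ φ : List Bool →. α, Partrec φ →
    ∃ c : ℕ, ∀ y : α, Kf V y ≤ Kf φ y + (c : ℕ∞)

/-- If `Kf ψ y ≤ m` for an achieved length, i.e. upper bound from a witness. -/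
lemma Kf_le_of_mem {α : Type} {ψ : List Bool →. α} {y : α} {p : List Bool}
    (h : y ∈ ψ p) : Kf ψ y ≤ (p.length : ℕ∞) :=
  sInf_le ⟨p, h, rfl⟩

/-- K is unbounded: for every `n` there is `y` with `n ≤ K(y)`. -/
lemma Kf_unbounded (V : List Bool →. ℕ) (htot : ∀ y : ℕ, Kf V y ≠ ⊤) (n : ℕ) :
    ∃ y : ℕ, n ≤ (Kf V y).toNat := by
  by_contra h
  push_neg at h
  -- every y has a program of length < n
  have hw : ∀ y : ℕ, ∃ p : List Bool, y ∈ V p ∧ p.length < n := by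
    intro y
    have hlt : Kf V y < (n : ℕ∞) := by
      have := ENat.coe_toNat (htot y)
      rw [← this]
      exact_mod_cast h y
    rw [Kf, sInf_lt_iff] at hlt
    obtain ⟨a, ⟨p, hp, hpl⟩, ha⟩ := hlt
    exact ⟨p, hp, by exact_mod_cast hpl ▸ ha⟩
  choose w hw1 hw2 using hw
  have hinj : Function.Injective w := fun y z hyz =>
    Part.mem_unique (hw1 y) (hyz ▸ hw1 z)
  have hfin : (Set.univ : Set ℕ).Finite := by
    have : (Set.univ : Set ℕ) ⊆ w ⁻¹' {l : List Bool | l.length < n} :=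
      fun y _ => hw2 y
    exact Set.Finite.subset ((List.finite_length_lt Bool n).preimage
      hinj.injOn) this
  exact Set.infinite_univ hfin

/-- `K` is not computable. -/
theorem K_not_computable (V : List Bool →. ℕ) (hV : OptimalFn V)
    (htot : ∀ y : ℕ, Kf V y ≠ ⊤) :
    ¬ Computable (fun y : ℕ => (Kf V y).toNat) := by
  intro hK
  set g : ℕ → ℕ := fun y => (Kf V y).toNat with hg
  -- f n = least y with n ≤ K y
  have hex : ∀ n : ℕ, ∃ y, n ≤ g y := Kf_unbounded V htot
  set f : ℕ → ℕ := fun n => Nat.find (hex n) with hf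
  -- f is computable
  have hfc : Computable f := by
    have hp : Computable₂ (fun n y : ℕ => decide (n ≤ g y)) :=
      (Primrec.nat_le.decide.to_comp).comp Computable.fst (hK.comp Computable.snd)
    have hrf : Partrec fun n => Nat.rfind (fun y => Part.some (decide (n ≤ g y))) := by
      exact Partrec.rfind hp
    apply hrf.of_eq_tot
    intro n
    apply Nat.mem_rfind.2
    constructor
    · simpa using Nat.find_spec (hex n)
    · intro m hm
      simp only [Part.mem_some_iff]
      have := Nat.find_min (hex n) hm
      simp [this]
  -- the cheap description φ
  set φ : List Bool →. ℕ := fun p => Part.some (f (p.length * p.length)) with hφ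
  have hφc : Partrec φ := by
    have : Computable (fun p : List Bool => f (p.length * p.length)) :=
      hfc.comp ((Primrec.nat_mul.comp Primrec.list_length Primrec.list_length).to_comp)
    exact this
  obtain ⟨c, hc⟩ := hV.2 φ hφc
  -- take m := c + 1
  set m : ℕ := c + 2 with hm
  set y : ℕ := f (m * m) with hy
  -- K_φ y ≤ m
  have h1 : Kf φ y ≤ (m : ℕ∞) := by
    have hmem : y ∈ φ (List.replicate m true) := by
      simp [hφ, hy]
    simpa using Kf_le_of_mem hmem
  -- 2^m ≤ K y
  have h2 : ((m * m : ℕ) : ℕ∞) ≤ Kf V y := by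
    have := Nat.find_spec (hex (m * m))
    rw [← ENat.coe_toNat (htot y)]
    exact_mod_cast this
  have h3 : ((m * m : ℕ) : ℕ∞) ≤ ((m + c : ℕ) : ℕ∞) := by
    calc ((m * m : ℕ) : ℕ∞) ≤ Kf V y := h2
      _ ≤ Kf φ y + (c : ℕ∞) := hc y
      _ ≤ (m : ℕ∞) + (c : ℕ∞) := add_le_add_left h1 _
      _ = ((m + c : ℕ) : ℕ∞) := by push_cast; ring
  have h4 : m * m ≤ m + c := by exact_mod_cast h3
  have h5 : m + c < m * m := by
    calc m + c < m + m := by omega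
      _ = 2 * m := by ring
      _ ≤ m * m := Nat.mul_le_mul_right m (by omega)
  omega
end

section
/- No unbounded lower bound: there is no partial computable function ψ : ℕ ⇀ ℕ which is unbounded on its domain and satisfies ψ(x) ≤ K(x) for all x in its domain. -/
open Nat.Partrec (Code)
open Nat.Partrec.Code

/-- No partial computable function which is unbounded on its domain
can be a lower bound for `K`. -/
theorem no_unbounded_pc_lower_bound (V : List Bool →. ℕ) (hV : OptimalFn V) :
    ¬ ∃ ψ : ℕ →. ℕ, Partrec ψ ∧
        (∀ n : ℕ, ∃ x : ℕ, ∃ m ∈ ψ x, n ≤ m) ∧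
        (∀ x : ℕ, ∀ m ∈ ψ x, (m : ℕ∞) ≤ Kf V x) := by
  rintro ⟨ψ, hψ, hub, hlb⟩
  obtain ⟨c, hc⟩ := exists_code.1 (Partrec.nat_iff.1 hψ)
  -- search function
  set f : ℕ → ℕ → Option ℕ := fun n k =>
    (evaln k.unpair.2 c k.unpair.1).bind fun m =>
      if n ≤ m then some k.unpair.1 else none with hf
  have hfc : Computable₂ f := by
    have hfp : Primrec (fun a : ℕ × ℕ => f a.1 a.2) := by
      apply Primrec.option_bind
      · exact primrec_evaln.comp <| Primrec.pair
          (Primrec.pair (Primrec.snd.comp (Primrec.unpair.comp Primrec.snd))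
            (Primrec.const c))
          (Primrec.fst.comp (Primrec.unpair.comp Primrec.snd))
      · exact (Primrec.ite
          (Primrec.nat_le.comp (Primrec.fst.comp Primrec.fst) Primrec.snd)
          (Primrec.option_some.comp
            (Primrec.fst.comp (Primrec.unpair.comp (Primrec.snd.comp Primrec.fst))))
          (Primrec.const none)).to₂
    exact (hfp.to₂).to_comp
  set G : ℕ →. ℕ := fun n => Nat.rfindOpt (f n) with hG
  have hGpart : Partrec G := Partrec.rfindOpt hfc
  -- G n is always defined and its value x satisfies ∃ m ∈ ψ x, n ≤ m
  have hGdom : ∀ n, (G n).Dom := by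
    intro n
    obtain ⟨x, m, hm, hnm⟩ := hub n
    rw [← hc] at hm
    obtain ⟨k, hk⟩ := evaln_complete.1 hm
    refine Nat.rfindOpt_dom.2 ⟨Nat.pair x k, x, ?_⟩
    rw [Option.mem_def] at hk
    simp [hf, Nat.unpair_pair, hk, hnm]
  have hGspec : ∀ n x, x ∈ G n → ∃ m ∈ ψ x, n ≤ m := by
    intro n x hx
    obtain ⟨k, hk⟩ := Nat.rfindOpt_spec hx
    simp only [hf, Option.mem_def, Option.bind_eq_some_iff] at hk
    obtain ⟨m, hm, hif⟩ := hk
    split_ifs at hif with h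
    cases hif
    exact ⟨m, by rw [← hc]; exact evaln_sound hm, h⟩
  -- the program φ
  set φ : List Bool →. ℕ := fun p => G (2 ^ p.length) with hφ
  have hpow : Primrec (fun k : ℕ => 2 ^ k) :=
    Primrec.nat_iff.2 <|
      (Nat.Primrec.pow.comp ((Nat.Primrec.const 2).pair .id)).of_eq (fun k => by simp)
  have hφpart : Partrec φ :=
    hGpart.comp ((hpow.comp Primrec.list_length).to_comp)
  obtain ⟨d, hd⟩ := hV.2 φ hφpart
  -- choose n with 2^n > n + d, namely n = d + 2
  set n : ℕ := d + 2 with hn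
  have hbig : n + d < 2 ^ n := by
    have := Nat.lt_two_pow_self (n := d)
    have h4 : 2 ^ n = 4 * 2 ^ d := by rw [hn]; ring
    omega
  -- x in G (2^n)
  obtain ⟨x, hx⟩ := Part.dom_iff_mem.1 (hGdom (2 ^ n))
  obtain ⟨m, hmψ, hmn⟩ := hGspec _ _ hx
  -- Kf φ x ≤ n
  have hKφ : Kf φ x ≤ (n : ℕ∞) := by
    apply sInf_le
    refine ⟨List.replicate n false, ?_, by simp⟩
    simpa [hφ] using hx
  have h1 : (m : ℕ∞) ≤ Kf V x := hlb x m hmψ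
  have h2 : Kf V x ≤ (n : ℕ∞) + (d : ℕ∞) := le_trans (hd x) (by gcongr)
  have h3 : ((2 ^ n : ℕ) : ℕ∞) ≤ ((n + d : ℕ) : ℕ∞) := by
    refine le_trans ?_ (le_trans h1 (by simpa using h2))
    exact_mod_cast Nat.cast_le.2 hmn
  have := Nat.cast_le.1 h3
  omega
end
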